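/- arXiv:math/0204269 — 3 statements merged into one kernel-verified Lean document; each statement's English description precedes it below -/
import Mathlib

section
/- Let N ≥ 1 be an integer and f ∈ C^N[a,b] with f^{(N)}(x) ≥ μ > 0 for all x ∈ [a,b]. Then for any γ > 0, the Lebesgue measure of the sublevel set {x ∈ [a,b] : |f(x)| ≤ γ} is at most A_N (γ/μ)^{1/N}, where A_N is a constant depending only on N. -/
open MeasureTheory Set

/-- A set whose ordered gaps are bounded by `c` has measure at most `2c`. -/
lemma christ_diam_vol_le {s : Set ℝ} {c : ℝ}
    (h : ∀ x ∈ s, ∀ y ∈ s, x ≤ y → y - x ≤ c) :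
    volume s ≤ ENNReal.ofReal (2 * c) := by
  rcases s.eq_empty_or_nonempty with rfl | ⟨x₀, hx₀⟩
  · simp
  · have hc : 0 ≤ c := by have := h x₀ hx₀ x₀ hx₀ le_rfl; linarith
    have hsub : s ⊆ Icc (x₀ - c) (x₀ + c) := by
      intro y hy
      rcases le_total x₀ y with hxy | hxy
      · have := h x₀ hx₀ y hy hxy
        exact ⟨by linarith, by linarith⟩
      · have := h y hy x₀ hx₀ hxy
        exact ⟨by linarith, by linarith⟩
    calc volume s ≤ volume (Icc (x₀ - c) (x₀ + c)) := measure_mono hsub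
      _ = ENNReal.ofReal (2 * c) := by rw [Real.volume_Icc]; congr 1; ring

/-- Iterated derivatives within a closed subinterval coincide with those within
the larger interval. -/
lemma christ_iter_sub (N : ℕ) (f : ℝ → ℝ) {a b c d : ℝ}
    (hf : ContDiffOn ℝ N f (Icc a b))
    (hac : a ≤ c) (hdb : d ≤ b) (hcd : c < d) :
    ∀ x ∈ Icc c d, iteratedDerivWithin N f (Icc c d) x = iteratedDerivWithin N f (Icc a b) x := by
  have hsub : Icc c d ⊆ Icc a b := Icc_subset_Icc hac hdb
  have hab : a < b := lt_of_lt_of_le (lt_of_le_of_lt hac hcd) hdb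
  have hIoo : ∀ x ∈ Ioo c d,
      iteratedDerivWithin N f (Icc c d) x = iteratedDerivWithin N f (Icc a b) x := by
    intro x hx
    have h1 : Icc a b ∩ Ioo c d = Ioo c d :=
      inter_eq_self_of_subset_right (Ioo_subset_Icc_self.trans hsub)
    have h2 : Icc c d ∩ Ioo c d = Ioo c d :=
      inter_eq_self_of_subset_right Ioo_subset_Icc_self
    have e1 := iteratedFDerivWithin_inter_open (𝕜 := ℝ) (f := f) (n := N) (s := Icc a b)
      isOpen_Ioo hx
    have e2 := iteratedFDerivWithin_inter_open (𝕜 := ℝ) (f := f) (n := N) (s := Icc c d)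
      isOpen_Ioo hx
    rw [h1] at e1
    rw [h2] at e2
    rw [iteratedDerivWithin_eq_iteratedFDerivWithin, iteratedDerivWithin_eq_iteratedFDerivWithin,
      ← e1, ← e2]
  intro x hx
  have hcont1 : ContinuousOn (iteratedDerivWithin N f (Icc c d)) (Icc c d) :=
    (hf.mono hsub).continuousOn_iteratedDerivWithin le_rfl (uniqueDiffOn_Icc hcd)
  have hcont2 : ContinuousOn (iteratedDerivWithin N f (Icc a b)) (Icc a b) :=
    hf.continuousOn_iteratedDerivWithin le_rfl (uniqueDiffOn_Icc hab)
  have hne : (nhdsWithin x (Ioo c d)).NeBot := by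
    apply mem_closure_iff_nhdsWithin_neBot.1
    rw [closure_Ioo hcd.ne]
    exact hx
  have t1 : Filter.Tendsto (iteratedDerivWithin N f (Icc c d)) (nhdsWithin x (Ioo c d))
      (nhds (iteratedDerivWithin N f (Icc c d) x)) :=
    (hcont1 x hx).mono Ioo_subset_Icc_self
  have t2 : Filter.Tendsto (iteratedDerivWithin N f (Icc a b)) (nhdsWithin x (Ioo c d))
      (nhds (iteratedDerivWithin N f (Icc a b) x)) :=
    (hcont2 x (hsub hx)).mono (Ioo_subset_Icc_self.trans hsub)
  have heq : iteratedDerivWithin N f (Icc a b) =ᶠ[nhdsWithin x (Ioo c d)]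
      iteratedDerivWithin N f (Icc c d) :=
    Filter.eventuallyEq_of_mem self_mem_nhdsWithin (fun y hy => (hIoo y hy).symm)
  exact tendsto_nhds_unique t1 (t2.congr' heq)

/-- Quantitative growth from a lower bound on the derivative within `Icc a b`. -/
lemma christ_slope_ge {a b : ℝ} {g : ℝ → ℝ} {μ : ℝ} (hab : a < b)
    (hg : ContinuousOn g (Icc a b))
    (hg' : DifferentiableOn ℝ g (Icc a b))
    (hd : ∀ x ∈ Icc a b, μ ≤ derivWithin g (Icc a b) x) :
    ∀ x ∈ Icc a b, ∀ y ∈ Icc a b, x ≤ y → μ * (y - x) ≤ g y - g x := by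
  apply Convex.mul_sub_le_image_sub_of_le_deriv (convex_Icc a b) hg
  · exact fun x hx => (hg' x (interior_subset hx)).mono interior_subset
  · intro x hx
    rw [interior_Icc] at hx
    have hmem : Icc a b ∈ nhds x := Icc_mem_nhds hx.1 hx.2
    rw [← derivWithin_of_mem_nhds hmem]
    exact hd x (Ioo_subset_Icc_self hx)

/-- Christ's sublevel set estimate: if `f^{(N)} ≥ μ > 0` on `[a,b]`, then
`|{x ∈ [a,b] : |f(x)| ≤ γ}| ≤ A_N (γ/μ)^{1/N}`. -/
theorem stmt_6 (N : ℕ) (hN : 1 ≤ N) :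
    ∃ A : ℝ, 0 < A ∧
      ∀ (a b : ℝ) (f : ℝ → ℝ) (μ γ : ℝ),
        a ≤ b → 0 < μ → 0 < γ →
        ContDiffOn ℝ N f (Icc a b) →
        (∀ x ∈ Icc a b, μ ≤ iteratedDerivWithin N f (Icc a b) x) →
        volume {x ∈ Icc a b | |f x| ≤ γ} ≤ ENNReal.ofReal (A * (γ / μ) ^ ((1 : ℝ) / N)) := by
  induction N, hN using Nat.le_induction with
  | base =>
    refine ⟨4, by norm_num, ?_⟩
    intro a b f μ γ hab hμ hγ hf hder
    rcases eq_or_lt_of_le hab with rfl | hab'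
    · have hsub : {x ∈ Icc a a | |f x| ≤ γ} ⊆ {a} := fun x hx => Icc_self a ▸ hx.1
      calc volume {x ∈ Icc a a | |f x| ≤ γ} ≤ volume {a} := measure_mono hsub
        _ = 0 := Real.volume_singleton
        _ ≤ _ := zero_le
    · have hu := uniqueDiffOn_Icc hab'
      have hd1 : ∀ x ∈ Icc a b, μ ≤ derivWithin f (Icc a b) x := by
        intro x hx
        have := hder x hx
        rwa [iteratedDerivWithin_one] at this
      have slope := christ_slope_ge hab' hf.continuousOn
        (hf.differentiableOn (by simp)) hd1
      have key : volume {x ∈ Icc a b | |f x| ≤ γ} ≤ ENNReal.ofReal (2 * (2 * γ / μ)) := by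
        apply christ_diam_vol_le
        intro x hx y hy hxy
        have h1 := slope x hx.1 y hy.1 hxy
        have h2 := abs_le.1 hx.2
        have h3 := abs_le.1 hy.2
        rw [show (2 : ℝ) * γ / μ = 2 * γ / μ from rfl, le_div_iff₀ hμ]
        nlinarith
      refine key.trans (ENNReal.ofReal_le_ofReal (le_of_eq ?_))
      have : ((γ / μ) : ℝ) ^ ((1 : ℝ) / ((1 : ℕ) : ℝ)) = γ / μ := by
        norm_num
      rw [this]
      field_simp
      ring
  | succ N hN ih =>
    obtain ⟨A, hA, hIH⟩ := ih
    refine ⟨4 + 2 * A, by positivity, ?_⟩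
    intro a b f μ γ hab hμ hγ hf hder
    rcases eq_or_lt_of_le hab with rfl | hab'
    · have hsub : {x ∈ Icc a a | |f x| ≤ γ} ⊆ {a} := fun x hx => Icc_self a ▸ hx.1
      calc volume {x ∈ Icc a a | |f x| ≤ γ} ≤ volume {a} := measure_mono hsub
        _ = 0 := Real.volume_singleton
        _ ≤ _ := zero_le
    have hx0 : (0 : ℝ) < γ / μ := div_pos hγ hμ
    set r : ℝ := (γ / μ) ^ ((1 : ℝ) / ((N + 1 : ℕ) : ℝ)) with hr
    have hr0 : 0 < r := Real.rpow_pos_of_pos hx0 _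
    set t : ℝ := μ * r with htdef
    have ht : 0 < t := mul_pos hμ hr0
    have hu := uniqueDiffOn_Icc hab'
    have hfN : ContDiffOn ℝ N f (Icc a b) := hf.of_le (by exact_mod_cast Nat.le_succ N)
    set g : ℝ → ℝ := iteratedDerivWithin N f (Icc a b) with hgdef
    have hgc : ContinuousOn g (Icc a b) :=
      hf.continuousOn_iteratedDerivWithin (by exact_mod_cast Nat.le_succ N) hu
    have hgd : DifferentiableOn ℝ g (Icc a b) :=
      hf.differentiableOn_iteratedDerivWithin (by exact_mod_cast Nat.lt_succ_self N) hu
    have hder' : ∀ x ∈ Icc a b, μ ≤ derivWithin g (Icc a b) x := by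
      intro x hx
      have := hder x hx
      rwa [iteratedDerivWithin_succ] at this
    have slope := christ_slope_ge hab' hgc hgd hder'
    set E : Set ℝ := {x ∈ Icc a b | |f x| ≤ γ} with hE
    set J : Set ℝ := {x ∈ Icc a b | |g x| ≤ t} with hJ
    set L : Set ℝ := {x ∈ Icc a b | g x < -t} with hL
    set R : Set ℝ := {x ∈ Icc a b | t < g x} with hR
    have cover : E ⊆ (E ∩ L) ∪ (J ∪ (E ∩ R)) := by
      intro x hx
      rcases lt_or_ge (g x) (-t) with h | h
      · exact Or.inl ⟨hx, hx.1, h⟩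
      rcases le_or_gt (g x) t with h' | h'
      · exact Or.inr (Or.inl ⟨hx.1, abs_le.2 ⟨h, h'⟩⟩)
      · exact Or.inr (Or.inr ⟨hx, hx.1, h'⟩)
    have volJ : volume J ≤ ENNReal.ofReal (2 * (2 * t / μ)) := by
      apply christ_diam_vol_le
      intro x hx y hy hxy
      have h1 := slope x hx.1 y hy.1 hxy
      have h2 := abs_le.1 hx.2
      have h3 := abs_le.1 hy.2
      rw [le_div_iff₀ hμ]
      nlinarith
    -- right piece
    have volR : volume (E ∩ R) ≤ ENNReal.ofReal (A * (γ / t) ^ ((1 : ℝ) / N)) := by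
      rcases R.eq_empty_or_nonempty with hRe | hRne
      · rw [hRe, inter_empty]
        simp
      · set c : ℝ := sInf R with hc
        have hbdd : BddBelow R := BddBelow.mono (fun x hx => hx.1) bddBelow_Icc
        have hcmem : c ∈ Icc a b :=
          closure_minimal (fun x (hx : x ∈ R) => hx.1) isClosed_Icc
            (csInf_mem_closure hRne hbdd)
        have hRc : R ⊆ Icc c b := fun x hx => ⟨csInf_le hbdd hx, hx.1.2⟩
        rcases eq_or_lt_of_le hcmem.2 with hcb | hcb
        · have hsub : E ∩ R ⊆ {b} := by
            intro x hx
            have := hRc hx.2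
            rw [hcb, Icc_self] at this
            exact this
          calc volume (E ∩ R) ≤ volume {b} := measure_mono hsub
            _ = 0 := Real.volume_singleton
            _ ≤ _ := zero_le
        · have hgc_c : t ≤ g c := by
            have hS : IsClosed {x | x ∈ Icc a b ∧ t ≤ g x} := by
              have : {x | x ∈ Icc a b ∧ t ≤ g x} = Icc a b ∩ g ⁻¹' Ici t := by
                ext x; simp [Set.mem_inter_iff, and_comm]
              rw [this]
              exact hgc.preimage_isClosed_of_isClosed isClosed_Icc isClosed_Ici
            have hRS : R ⊆ {x | x ∈ Icc a b ∧ t ≤ g x} :=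
              fun x hx => ⟨hx.1, hx.2.le⟩
            exact (closure_minimal hRS hS (csInf_mem_closure hRne hbdd)).2
          have hge : ∀ x ∈ Icc c b, t ≤ g x := by
            intro x hx
            have := slope c hcmem x ⟨hcmem.1.trans hx.1, hx.2⟩ hx.1
            nlinarith [mul_nonneg hμ.le (sub_nonneg.2 hx.1)]
          have hsubderiv : ∀ x ∈ Icc c b, t ≤ iteratedDerivWithin N f (Icc c b) x := by
            intro x hx
            rw [christ_iter_sub N f hfN hcmem.1 le_rfl hcb x hx]
            exact hge x hx
          have hEc : E ∩ R ⊆ {x ∈ Icc c b | |f x| ≤ γ} :=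
            fun x hx => ⟨hRc hx.2, hx.1.2⟩
          calc volume (E ∩ R) ≤ volume {x ∈ Icc c b | |f x| ≤ γ} := measure_mono hEc
            _ ≤ ENNReal.ofReal (A * (γ / t) ^ ((1 : ℝ) / N)) :=
              hIH c b f t γ hcb.le ht hγ (hfN.mono (Icc_subset_Icc hcmem.1 le_rfl)) hsubderiv
    -- left piece
    have volL : volume (E ∩ L) ≤ ENNReal.ofReal (A * (γ / t) ^ ((1 : ℝ) / N)) := by
      rcases L.eq_empty_or_nonempty with hLe | hLne
      · rw [hLe, inter_empty]
        simp
      · set d : ℝ := sSup L with hd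
        have hbdd : BddAbove L := BddAbove.mono (fun x hx => hx.1) bddAbove_Icc
        have hdmem : d ∈ Icc a b :=
          closure_minimal (fun x (hx : x ∈ L) => hx.1) isClosed_Icc
            (csSup_mem_closure hLne hbdd)
        have hLd : L ⊆ Icc a d := fun x hx => ⟨hx.1.1, le_csSup hbdd hx⟩
        rcases eq_or_lt_of_le hdmem.1 with had | had
        · have hsub : E ∩ L ⊆ {a} := by
            intro x hx
            have := hLd hx.2
            rw [← had, Icc_self] at this
            exact this
          calc volume (E ∩ L) ≤ volume {a} := measure_mono hsub
            _ = 0 := Real.volume_singleton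
            _ ≤ _ := zero_le
        · have hgd_d : g d ≤ -t := by
            have hS : IsClosed {x | x ∈ Icc a b ∧ g x ≤ -t} := by
              have : {x | x ∈ Icc a b ∧ g x ≤ -t} = Icc a b ∩ g ⁻¹' Iic (-t) := by
                ext x; simp [Set.mem_inter_iff, and_comm]
              rw [this]
              exact hgc.preimage_isClosed_of_isClosed isClosed_Icc isClosed_Iic
            have hLS : L ⊆ {x | x ∈ Icc a b ∧ g x ≤ -t} :=
              fun x hx => ⟨hx.1, hx.2.le⟩
            exact (closure_minimal hLS hS (csSup_mem_closure hLne hbdd)).2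
          have hle : ∀ x ∈ Icc a d, g x ≤ -t := by
            intro x hx
            have := slope x ⟨hx.1, hx.2.trans hdmem.2⟩ d hdmem hx.2
            nlinarith [mul_nonneg hμ.le (sub_nonneg.2 hx.2)]
          have hudn := uniqueDiffOn_Icc had
          have hsubderiv : ∀ x ∈ Icc a d, t ≤ iteratedDerivWithin N (-f) (Icc a d) x := by
            intro x hx
            rw [iteratedDerivWithin_neg f,
              christ_iter_sub N f hfN le_rfl hdmem.2 had x hx]
            have := hle x hx
            linarith
          have hEd : E ∩ L ⊆ {x ∈ Icc a d | |(-f) x| ≤ γ} := by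
            intro x hx
            refine ⟨hLd hx.2, ?_⟩
            simpa [abs_neg] using hx.1.2
          calc volume (E ∩ L) ≤ volume {x ∈ Icc a d | |(-f) x| ≤ γ} := measure_mono hEd
            _ ≤ ENNReal.ofReal (A * (γ / t) ^ ((1 : ℝ) / N)) :=
              hIH a d (-f) t γ had.le ht hγ
                ((hfN.mono (Icc_subset_Icc le_rfl hdmem.2)).neg) hsubderiv
    -- arithmetic
    have hN1 : ((N : ℝ)) ≠ 0 := Nat.cast_ne_zero.2 (by omega)
    have hN2 : (((N + 1 : ℕ)) : ℝ) ≠ 0 := Nat.cast_ne_zero.2 (by omega)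
    have h1 : r ^ (((N + 1 : ℕ)) : ℝ) = γ / μ := by
      rw [hr, ← Real.rpow_mul hx0.le, one_div, inv_mul_cancel₀ hN2, Real.rpow_one]
    have h2 : r ^ ((N : ℕ) : ℝ) * r = γ / μ := by
      rw [← h1, ← Real.rpow_add_one hr0.ne']
      congr 1
      push_cast
      ring
    have hpow : γ / t = r ^ ((N : ℕ) : ℝ) := by
      rw [htdef]
      rw [show γ / (μ * r) = (γ / μ) / r by field_simp]
      rw [← h2, mul_div_cancel_right₀ _ hr0.ne']
    have hfin : (γ / t) ^ ((1 : ℝ) / N) = r := by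
      rw [hpow, ← Real.rpow_mul hr0.le, mul_one_div, div_self hN1, Real.rpow_one]
    have htr : 2 * (2 * t / μ) = 4 * r := by
      rw [htdef]
      field_simp
      ring
    calc volume E ≤ volume ((E ∩ L) ∪ (J ∪ (E ∩ R))) := measure_mono cover
      _ ≤ volume (E ∩ L) + (volume J + volume (E ∩ R)) :=
        (measure_union_le _ _).trans (add_le_add le_rfl (measure_union_le _ _))
      _ ≤ ENNReal.ofReal (A * (γ / t) ^ ((1 : ℝ) / N)) +
          (ENNReal.ofReal (2 * (2 * t / μ)) +
            ENNReal.ofReal (A * (γ / t) ^ ((1 : ℝ) / N))) :=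
        add_le_add volL (add_le_add volJ volR)
      _ = ENNReal.ofReal (A * (γ / t) ^ ((1 : ℝ) / N) +
          (2 * (2 * t / μ) + A * (γ / t) ^ ((1 : ℝ) / N))) := by
        rw [← ENNReal.ofReal_add (by positivity) (by positivity),
          ← ENNReal.ofReal_add (by positivity) (by positivity)]
      _ ≤ ENNReal.ofReal ((4 + 2 * A) * (γ / μ) ^ ((1 : ℝ) / ((N + 1 : ℕ) : ℝ))) := by
        apply ENNReal.ofReal_le_ofReal
        rw [hfin, htr, ← hr]
        ring_nf
        exact le_rfl
end

section
/- Let {T_i} be a family of bounded operators on a Hilbert space H such that T_i T_{i'}* = 0 for all i ≠ i', and such that Σ_{i'} ‖T_i* T_{i'}‖ ≤ C for a constant C independent of i. Then the sum T = Σ_i T_i is bounded with ‖T‖ ≤ C^{1/2}. -/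
open MeasureTheory

/-- One-sided Cotlar–Stein lemma: if `T_i T_{i'}* = 0` for `i ≠ i'` and
`Σ_{i'} ‖T_i* T_{i'}‖ ≤ C` uniformly in `i`, then `‖Σ T_i‖ ≤ √C`. -/
theorem stmt_7 {H : Type*} [NormedAddCommGroup H] [InnerProductSpace ℂ H] [CompleteSpace H]
    {ι : Type*} (s : Finset ι) (T : ι → H →L[ℂ] H) (C : ℝ)
    (horth : ∀ i ∈ s, ∀ i' ∈ s, i ≠ i' →
      (T i) ∘L (ContinuousLinearMap.adjoint (T i')) = 0)
    (hsum : ∀ i ∈ s, ∑ i' ∈ s, ‖(ContinuousLinearMap.adjoint (T i)) ∘L (T i')‖ ≤ C) :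
    ‖∑ i ∈ s, T i‖ ≤ Real.sqrt C := by
  classical
  rcases s.eq_empty_or_nonempty with rfl | ⟨i₀, hi₀⟩
  · simpa using Real.sqrt_nonneg C
  have hC0 : 0 ≤ C :=
    le_trans (Finset.sum_nonneg fun _ _ => norm_nonneg _) (hsum i₀ hi₀)
  -- rephrase orthogonality and sums in star/mul language
  have horth' : ∀ i ∈ s, ∀ i' ∈ s, i ≠ i' → T i * star (T i') = 0 := by
    intro i hi i' hi' h
    rw [ContinuousLinearMap.star_eq_adjoint, ContinuousLinearMap.mul_def]
    exact horth i hi i' hi' h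
  have hsum' : ∀ i ∈ s, ∑ i' ∈ s, ‖star (T i) * T i'‖ ≤ C := by
    intro i hi
    simpa only [ContinuousLinearMap.star_eq_adjoint, ContinuousLinearMap.mul_def]
      using hsum i hi
  set Tt : H →L[ℂ] H := ∑ i ∈ s, T i with hTt
  set A : H →L[ℂ] H := ∑ i ∈ s, T i * star (T i) with hA
  have hTTstar : Tt * star Tt = A := by
    rw [hTt, hA, star_sum, Finset.sum_mul_sum]
    refine Finset.sum_congr rfl fun i hi => ?_
    refine Finset.sum_eq_single_of_mem i hi fun j hj hji => horth' i hi j hj (Ne.symm hji)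
  -- each ‖T i‖ ≤ √C
  have hTi : ∀ i ∈ s, ‖T i‖ ≤ Real.sqrt C := by
    intro i hi
    have h1 : ‖star (T i) * T i‖ ≤ C :=
      le_trans (Finset.single_le_sum (fun j _ => norm_nonneg (star (T i) * T j)) hi)
        (hsum' i hi)
    rw [CStarRing.norm_star_mul_self] at h1
    rw [show Real.sqrt C = Real.sqrt C * 1 by ring, ← Real.sqrt_one]
    calc ‖T i‖ = Real.sqrt (‖T i‖ * ‖T i‖) := (Real.sqrt_mul_self (norm_nonneg _)).symm
      _ ≤ Real.sqrt C * Real.sqrt 1 := by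
          rw [Real.sqrt_one, mul_one]; exact Real.sqrt_le_sqrt h1
  -- key inductive bound
  have key : ∀ n : ℕ, ∀ i ∈ s, ‖star (T i) * A ^ n‖ ≤ Real.sqrt C * C ^ n := by
    intro n
    induction n with
    | zero =>
      intro i hi
      simpa using le_trans (le_of_eq (norm_star (T i))) (hTi i hi)
    | succ n ih =>
      intro i hi
      have hexp : star (T i) * A ^ (n + 1) =
          ∑ i' ∈ s, (star (T i) * T i') * (star (T i') * A ^ n) := by
        rw [pow_succ', hA, Finset.sum_mul, Finset.mul_sum]
        simp only [mul_assoc]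
      rw [hexp]
      calc ‖∑ i' ∈ s, (star (T i) * T i') * (star (T i') * A ^ n)‖
          ≤ ∑ i' ∈ s, ‖star (T i) * T i'‖ * ‖star (T i') * A ^ n‖ :=
            le_trans (norm_sum_le _ _) (Finset.sum_le_sum fun j _ => norm_mul_le _ _)
        _ ≤ ∑ i' ∈ s, ‖star (T i) * T i'‖ * (Real.sqrt C * C ^ n) :=
            Finset.sum_le_sum fun j hj =>
              mul_le_mul_of_nonneg_left (ih j hj) (norm_nonneg _)
        _ = (∑ i' ∈ s, ‖star (T i) * T i'‖) * (Real.sqrt C * C ^ n) := by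
            rw [Finset.sum_mul]
        _ ≤ C * (Real.sqrt C * C ^ n) :=
            mul_le_mul_of_nonneg_right (hsum' i hi)
              (mul_nonneg (Real.sqrt_nonneg _) (pow_nonneg hC0 _))
        _ = Real.sqrt C * C ^ (n + 1) := by ring
  -- bound on powers of A
  have hApow : ∀ n : ℕ, ‖A ^ n‖ ≤ (s.card : ℝ) * C ^ n := by
    intro n
    cases n with
    | zero =>
      simpa using (le_trans ContinuousLinearMap.norm_id_le
        (by exact_mod_cast Nat.one_le_iff_ne_zero.2 (Finset.card_ne_zero_of_mem hi₀)) :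
          ‖(1 : H →L[ℂ] H)‖ ≤ (s.card : ℝ))
    | succ n =>
      have hexp : A ^ (n + 1) = ∑ i ∈ s, T i * (star (T i) * A ^ n) := by
        rw [pow_succ', hA, Finset.sum_mul]
        simp only [mul_assoc]
      rw [hexp]
      calc ‖∑ i ∈ s, T i * (star (T i) * A ^ n)‖
          ≤ ∑ i ∈ s, ‖T i‖ * ‖star (T i) * A ^ n‖ :=
            le_trans (norm_sum_le _ _) (Finset.sum_le_sum fun j _ => norm_mul_le _ _)
        _ ≤ ∑ i ∈ s, Real.sqrt C * (Real.sqrt C * C ^ n) :=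
            Finset.sum_le_sum fun j hj =>
              mul_le_mul (hTi j hj) (key n j hj) (norm_nonneg _) (Real.sqrt_nonneg _)
        _ = (s.card : ℝ) * (Real.sqrt C * Real.sqrt C * C ^ n) := by
            rw [Finset.sum_const, nsmul_eq_mul]; ring
        _ = (s.card : ℝ) * C ^ (n + 1) := by
            rw [Real.mul_self_sqrt hC0]; ring
  -- A is selfadjoint
  have hAsa : IsSelfAdjoint A := hTTstar ▸ IsSelfAdjoint.mul_star_self Tt
  -- ‖Tt‖^2 ^ (2^k) ≤ card * C ^ (2^k)
  have hmain : ∀ k : ℕ, (‖Tt‖ ^ 2) ^ 2 ^ k ≤ (s.card : ℝ) * C ^ 2 ^ k := by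
    intro k
    have h1 : ‖A ^ 2 ^ k‖ = ‖A‖ ^ 2 ^ k := by
      simpa [← coe_nnnorm, NNReal.coe_pow] using congrArg NNReal.toReal (hAsa.nnnorm_pow_two_pow k)
    have h2 : ‖A‖ = ‖Tt‖ ^ 2 := by
      rw [← hTTstar, CStarRing.norm_self_mul_star, sq]
    calc (‖Tt‖ ^ 2) ^ 2 ^ k = ‖A ^ 2 ^ k‖ := by rw [h1, h2]
      _ ≤ (s.card : ℝ) * C ^ 2 ^ k := hApow _
  -- conclude ‖Tt‖^2 ≤ C
  have hfin : ‖Tt‖ ^ 2 ≤ C := by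
    by_contra hc
    push_neg at hc
    rcases hC0.eq_or_lt with rfl | hCpos
    · have := hmain 0
      simp only [pow_zero, pow_one, mul_zero] at this
      exact absurd this (not_le.2 (lt_of_le_of_lt (by positivity) hc))
    · set r := ‖Tt‖ ^ 2 with hr
      have hrC : 1 < r / C := (one_lt_div hCpos).2 hc
      obtain ⟨k, hk⟩ := pow_unbounded_of_one_lt (s.card : ℝ) hrC
      have hk2 : (s.card : ℝ) < (r / C) ^ 2 ^ k :=
        lt_of_lt_of_le hk (pow_le_pow_right₀ hrC.le (Nat.le_of_lt (Nat.lt_two_pow_self (n := k))))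
      have hcontra : (s.card : ℝ) * C ^ 2 ^ k < r ^ 2 ^ k := by
        have := mul_lt_mul_of_pos_right hk2 (pow_pos hCpos (2 ^ k))
        rwa [div_pow, div_mul_cancel₀] at this
        exact ne_of_gt (pow_pos hCpos _)
      exact absurd (hmain k) (not_le.2 hcontra)
  calc ‖Tt‖ = Real.sqrt (‖Tt‖ ^ 2) := by rw [Real.sqrt_sq (norm_nonneg _)]
    _ ≤ Real.sqrt C := Real.sqrt_le_sqrt hfin
end

section
/- Let P(h) = 1 + Σ_{i=1}^N a_i h^i be a real polynomial, r₀ = 0, and for i ≥ 1 suppose |a_i| ≤ C·2^{r_i} with r_i ≥ 0. Let Σ be the intersection of the closed half-planes {(x,y) : y ≥ r_i + i·x} for i = 0,…,N, and let x₁ < … < x_n be the x-coordinates of the corner points of the boundary of Σ (so n ≤ N). If additionally |a_i| ≥ C^{-1}2^{r_i} whenever r_i > 0, then there is a constant B = B(C,N) such that |P(h)| ≥ B^{-1} for all h ∈ (0,1] with log₂ h ∉ ⋃_{j=1}^n (x_j − B, x_j + B). -/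
open Set

set_option maxHeartbeats 1000000 in
/-- Outside `B`-neighborhoods of the corner abscissas of the Newton-type convex
region `Σ = {(x,y) : y ≥ r_i + i·x, i = 0,…,N}` (whose boundary is the graph of
`g(x) = max_i (r_i + i x)`, with corners exactly where the max is attained twice),
a polynomial `P(h) = 1 + Σ a_i h^i` with `|a_i| ≍ 2^{r_i}` satisfies
`|P(h)| ≥ B⁻¹` for `h ∈ (0,1]`, with `B = B(C,N)`. -/
theorem stmt_10 (N : ℕ) (hN : 1 ≤ N) (C : ℝ) (hC : 0 < C) :
    ∃ B : ℝ, 0 < B ∧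
      ∀ (r : ℕ → ℕ) (a : ℕ → ℝ) (n : ℕ) (xs : ℕ → ℝ) (g : ℝ → ℝ),
        r 0 = 0 → n ≤ N →
        (∀ i, 1 ≤ i → i ≤ N → |a i| ≤ C * 2 ^ (r i)) →
        (∀ i, 1 ≤ i → i ≤ N → 0 < r i → C⁻¹ * 2 ^ (r i) ≤ |a i|) →
        (∀ x : ℝ, IsGreatest {y : ℝ | ∃ i ≤ N, y = (r i : ℝ) + (i : ℝ) * x} (g x)) →
        (∀ k, 1 ≤ k → k < n → xs k < xs (k + 1)) →
        (∀ x : ℝ,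
          (∃ i ≤ N, ∃ j ≤ N, i ≠ j ∧ (r i : ℝ) + (i : ℝ) * x = g x ∧
              (r j : ℝ) + (j : ℝ) * x = g x) ↔ ∃ k, 1 ≤ k ∧ k ≤ n ∧ x = xs k) →
        ∀ h : ℝ, h ∈ Ioc (0 : ℝ) 1 →
          (∀ k, 1 ≤ k → k ≤ n → B ≤ |Real.logb 2 h - xs k|) →
          B⁻¹ ≤ |1 + ∑ i ∈ Finset.Icc 1 N, a i * h ^ i| := by
  set C' : ℝ := max C 1 with hC'def
  have hC'1 : (1:ℝ) ≤ C' := le_max_right _ _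
  have hC'0 : (0:ℝ) < C' := by linarith
  have hN0 : (0:ℝ) < (N:ℝ) := by exact_mod_cast Nat.lt_of_lt_of_le Nat.zero_lt_one hN
  set B : ℝ := max (2*C') (2 * Real.logb 2 (2*(N:ℝ)*C'^2)) with hBdef
  have hB2C : 2*C' ≤ B := le_max_left _ _
  have hBpos : (0:ℝ) < B := by linarith
  have hBpow : 2*(N:ℝ)*C'^2 ≤ (2:ℝ) ^ (B/2) := by
    have h1 : Real.logb 2 (2*(N:ℝ)*C'^2) ≤ B/2 := by
      have h2 := le_max_right (2*C') (2 * Real.logb 2 (2*(N:ℝ)*C'^2))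
      rw [← hBdef] at h2; linarith
    calc 2*(N:ℝ)*C'^2 = (2:ℝ) ^ Real.logb 2 (2*(N:ℝ)*C'^2) :=
        (Real.rpow_logb two_pos (by norm_num) (by positivity)).symm
      _ ≤ (2:ℝ) ^ (B/2) := Real.rpow_le_rpow_of_exponent_le one_le_two h1
  refine ⟨B, hBpos, ?_⟩
  intro r a n xs g hr0 hnN hub hlb hg hmono hcorner h hh hfar
  obtain ⟨hh0, hh1⟩ := hh
  set x : ℝ := Real.logb 2 h with hxdef
  have hx2 : (2:ℝ) ^ x = h := Real.rpow_logb two_pos (by norm_num) hh0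
  have hxle0 : x ≤ 0 := Real.logb_nonpos one_lt_two hh0.le hh1
  have hpow_eq : ∀ i : ℕ, ((2:ℝ) ^ (r i) : ℝ) = (2:ℝ) ^ ((r i : ℝ)) := fun i =>
    (Real.rpow_natCast 2 (r i)).symm
  have hub' : ∀ i, 1 ≤ i → i ≤ N → |a i| ≤ C' * (2:ℝ) ^ ((r i : ℝ)) := by
    intro i h1 h2
    rw [← hpow_eq]
    exact (hub i h1 h2).trans (mul_le_mul_of_nonneg_right (le_max_left _ _) (by positivity))
  have hlb' : ∀ i, 1 ≤ i → i ≤ N → 0 < r i → C'⁻¹ * (2:ℝ) ^ ((r i:ℝ)) ≤ |a i| := by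
    intro i h1 h2 h3
    rw [← hpow_eq]
    refine le_trans ?_ (hlb i h1 h2 h3)
    exact mul_le_mul_of_nonneg_right (inv_anti₀ hC (le_max_left _ _)) (by positivity)
  have hpowh : ∀ i : ℕ, h ^ i = (2:ℝ) ^ ((i:ℝ) * x) := by
    intro i
    rw [← hx2, ← Real.rpow_natCast ((2:ℝ)^x) i, ← Real.rpow_mul (by norm_num : (0:ℝ) ≤ 2) x i,
      mul_comm]
  -- the maximizer at x
  obtain ⟨⟨m, hmN, hgm⟩, hgub⟩ := hg x
  -- no corner within B/2 of x
  have hnotcorner : ∀ t : ℝ, |t - x| ≤ B/2 →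
      ¬ (∃ i ≤ N, ∃ j ≤ N, i ≠ j ∧ (r i:ℝ) + (i:ℝ)*t = g t ∧ (r j:ℝ) + (j:ℝ)*t = g t) := by
    intro t ht hcon
    obtain ⟨k, hk1, hkn, htk⟩ := (hcorner t).1 hcon
    have h2 := hfar k hk1 hkn
    rw [← htk, abs_sub_comm] at h2
    linarith
  -- unique maximizer at x
  have huniq : ∀ i, i ≤ N → i ≠ m → (r i:ℝ) + (i:ℝ) * x < g x := by
    intro i hiN hne
    rcases lt_or_eq_of_le (hgub ⟨i, hiN, rfl⟩) with hlt | heq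
    · exact hlt
    · exact absurd ⟨i, hiN, m, hmN, hne, heq, hgm.symm⟩
        (hnotcorner x (by simpa using (by positivity : (0:ℝ) ≤ B/2)))
  have hFne : ((Finset.range (N+1)).erase m).Nonempty := by
    rcases Nat.eq_zero_or_pos m with h0 | h0
    · exact ⟨1, Finset.mem_erase.2 ⟨by omega, Finset.mem_range.2 (by omega)⟩⟩
    · exact ⟨0, Finset.mem_erase.2 ⟨by omega, Finset.mem_range.2 (by omega)⟩⟩
  set F := (Finset.range (N+1)).erase m with hFdef
  set ψ : ℝ → ℝ := fun t => ((r m:ℝ) + (m:ℝ)*t) - F.sup' hFne (fun i => (r i:ℝ) + (i:ℝ)*t)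
    with hψdef
  have hψcont : Continuous ψ := by
    apply Continuous.sub (continuous_const.add (continuous_const.mul continuous_id))
    exact Continuous.finset_sup'_apply hFne
      (fun i _ => continuous_const.add (continuous_const.mul continuous_id))
  have hψx : 0 < ψ x := by
    obtain ⟨i, hiF, hieq⟩ := Finset.exists_mem_eq_sup' hFne (fun i => (r i:ℝ) + (i:ℝ)*x)
    have hiN : i ≤ N := by
      have := Finset.mem_range.1 (Finset.mem_of_mem_erase hiF); omega
    have hlt := huniq i hiN (Finset.ne_of_mem_erase hiF)
    rw [hgm] at hlt
    show 0 < ((r m:ℝ) + (m:ℝ)*x) - F.sup' hFne (fun i => (r i:ℝ) + (i:ℝ)*x)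
    rw [hieq]; linarith
  -- ψ is nonnegative on [x - B/2, x + B/2]
  have hψnn : ∀ t : ℝ, |t - x| ≤ B/2 → 0 ≤ ψ t := by
    intro t ht
    by_contra hneg
    push_neg at hneg
    have habs := abs_le.1 ht
    have hexists : ∃ t0, |t0 - x| ≤ B/2 ∧ ψ t0 = 0 := by
      rcases le_total x t with hxt | htx
      · have hsub := intermediate_value_Icc' hxt hψcont.continuousOn
        obtain ⟨t0, ht0mem, ht00⟩ := hsub ⟨hneg.le, hψx.le⟩
        exact ⟨t0, by
          rw [abs_le]; constructor
          · linarith [ht0mem.1]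
          · linarith [ht0mem.2], ht00⟩
      · have hsub := intermediate_value_Icc htx hψcont.continuousOn
        obtain ⟨t0, ht0mem, ht00⟩ := hsub ⟨hneg.le, hψx.le⟩
        exact ⟨t0, by
          rw [abs_le]; constructor
          · linarith [ht0mem.1]
          · linarith [ht0mem.2], ht00⟩
    obtain ⟨t0, ht0, hψt0⟩ := hexists
    -- at t0 the max is attained twice: corner
    obtain ⟨i0, hi0F, hi0eq⟩ := Finset.exists_mem_eq_sup' hFne (fun i => (r i:ℝ) + (i:ℝ)*t0)
    have hi0N : i0 ≤ N := by
      have := Finset.mem_range.1 (Finset.mem_of_mem_erase hi0F); omega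
    have hi0m : i0 ≠ m := Finset.ne_of_mem_erase hi0F
    have hsupeq : F.sup' hFne (fun i => (r i:ℝ) + (i:ℝ)*t0) = (r m:ℝ) + (m:ℝ)*t0 := by
      have h0 : ((r m:ℝ) + (m:ℝ)*t0) - F.sup' hFne (fun i => (r i:ℝ) + (i:ℝ)*t0) = 0 := hψt0
      linarith
    have hi0val : (r i0:ℝ) + (i0:ℝ)*t0 = (r m:ℝ) + (m:ℝ)*t0 := by
      rw [← hi0eq, hsupeq]
    obtain ⟨⟨m', hm'N, hgm'⟩, hgub'⟩ := hg t0
    have hgt0 : g t0 = (r m:ℝ) + (m:ℝ)*t0 := by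
      have hle1 : (r m:ℝ) + (m:ℝ)*t0 ≤ g t0 := hgub' ⟨m, hmN, rfl⟩
      have hle2 : g t0 ≤ (r m:ℝ) + (m:ℝ)*t0 := by
        rcases eq_or_ne m' m with hmm | hmm
        · rw [hgm', hmm]
        · have hm'F : m' ∈ F := Finset.mem_erase.2 ⟨hmm, Finset.mem_range.2 (by omega)⟩
          have hle := Finset.le_sup' (fun i => (r i:ℝ) + (i:ℝ)*t0) hm'F
          rw [hsupeq] at hle
          rw [hgm']; exact hle
      linarith
    exact hnotcorner t0 ht0 ⟨i0, hi0N, m, hmN, hi0m, by rw [hi0val, hgt0], hgt0.symm⟩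
  -- the geometric gap
  have hgap : ∀ j, j ≤ N → j ≠ m → (r j:ℝ) + (j:ℝ)*x ≤ (r m:ℝ) + (m:ℝ)*x - B/2 := by
    intro j hjN hjm
    have hjF : j ∈ F := Finset.mem_erase.2 ⟨hjm, Finset.mem_range.2 (by omega)⟩
    have hB2 : (0:ℝ) ≤ B/2 := by linarith
    have h1 : (r j:ℝ) + (j:ℝ)*(x + B/2) ≤ (r m:ℝ) + (m:ℝ)*(x + B/2) := by
      have hnn : 0 ≤ ((r m:ℝ) + (m:ℝ)*(x + B/2))
          - F.sup' hFne (fun i => (r i:ℝ) + (i:ℝ)*(x + B/2)) :=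
        hψnn (x + B/2) (by rw [add_sub_cancel_left, abs_of_nonneg hB2])
      have hle := Finset.le_sup' (fun i => (r i:ℝ) + (i:ℝ)*(x + B/2)) hjF
      linarith
    have h2 : (r j:ℝ) + (j:ℝ)*(x - B/2) ≤ (r m:ℝ) + (m:ℝ)*(x - B/2) := by
      have hnn : 0 ≤ ((r m:ℝ) + (m:ℝ)*(x - B/2))
          - F.sup' hFne (fun i => (r i:ℝ) + (i:ℝ)*(x - B/2)) :=
        hψnn (x - B/2) (by rw [sub_sub_cancel_left, abs_neg, abs_of_nonneg hB2])
      have hle := Finset.le_sup' (fun i => (r i:ℝ) + (i:ℝ)*(x - B/2)) hjF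
      linarith
    rcases lt_or_gt_of_ne hjm with hlt | hgt
    · have hc : (j:ℝ) + 1 ≤ (m:ℝ) := by exact_mod_cast hlt
      have key : (0:ℝ) ≤ ((m:ℝ) - (j:ℝ) - 1) * (B/2) := mul_nonneg (by linarith) hB2
      nlinarith [h2, key]
    · have hc : (m:ℝ) + 1 ≤ (j:ℝ) := by exact_mod_cast hgt
      have key : (0:ℝ) ≤ ((j:ℝ) - (m:ℝ) - 1) * (B/2) := mul_nonneg (by linarith) hB2
      nlinarith [h1, key]
  -- abbreviations
  set G : ℝ := (r m:ℝ) + (m:ℝ)*x with hGdef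
  have hG0 : 0 ≤ G := by
    have hmem : (0:ℝ) ∈ {y : ℝ | ∃ i ≤ N, y = (r i : ℝ) + (i : ℝ) * x} :=
      ⟨0, Nat.zero_le N, by simp [hr0]⟩
    have hle := hgub hmem
    rw [hgm] at hle
    exact hle
  have hvpos : (0:ℝ) < (2:ℝ)^(B/2) := Real.rpow_pos_of_pos two_pos _
  have hupos : (0:ℝ) < (2:ℝ)^G := Real.rpow_pos_of_pos two_pos _
  have hu1 : (1:ℝ) ≤ (2:ℝ)^G := by
    have hle := Real.rpow_le_rpow_of_exponent_le one_le_two hG0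
    rwa [Real.rpow_zero] at hle
  have hkey : (N:ℝ)*C' / (2:ℝ)^(B/2) ≤ (2*C')⁻¹ := by
    rw [div_le_iff₀ hvpos]
    calc (N:ℝ)*C' = (2*C')⁻¹ * (2*(N:ℝ)*C'^2) := by field_simp
      _ ≤ (2*C')⁻¹ * (2:ℝ)^(B/2) := mul_le_mul_of_nonneg_left hBpow (by positivity)
  have hBinv : B⁻¹ ≤ (2*C')⁻¹ := inv_anti₀ (by linarith) hB2C
  have h2Cpos : (0:ℝ) < (2*C')⁻¹ := by positivity
  -- bound on each non-dominant term
  have hterm : ∀ i ∈ Finset.Icc 1 N, i ≠ m →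
      |a i * h ^ i| ≤ C' * (2:ℝ)^(G - B/2) := by
    intro i hi hne
    obtain ⟨hi1, hiN⟩ := Finset.mem_Icc.1 hi
    rw [abs_mul, abs_of_nonneg (pow_nonneg hh0.le i), hpowh i]
    calc |a i| * (2:ℝ)^((i:ℝ)*x)
        ≤ (C' * (2:ℝ)^((r i:ℝ))) * (2:ℝ)^((i:ℝ)*x) :=
          mul_le_mul_of_nonneg_right (hub' i hi1 hiN) (by positivity)
      _ = C' * (2:ℝ)^((r i:ℝ) + (i:ℝ)*x) := by rw [Real.rpow_add two_pos]; ring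
      _ ≤ C' * (2:ℝ)^(G - B/2) :=
          mul_le_mul_of_nonneg_left
            (Real.rpow_le_rpow_of_exponent_le one_le_two (hgap i hiN hne)) hC'0.le
  rcases Nat.eq_zero_or_pos m with hm0 | hm1
  · -- dominant index is 0: the constant term 1 dominates
    have hGeq : G = 0 := by rw [hGdef, hm0, hr0]; simp
    have hsum : |∑ i ∈ Finset.Icc 1 N, a i * h ^ i| ≤ (N:ℝ) * (C' * (2:ℝ)^(G - B/2)) := by
      calc |∑ i ∈ Finset.Icc 1 N, a i * h ^ i| ≤ ∑ i ∈ Finset.Icc 1 N, |a i * h ^ i| :=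
          Finset.abs_sum_le_sum_abs _ _
        _ ≤ ∑ _i ∈ Finset.Icc 1 N, C' * (2:ℝ)^(G - B/2) :=
          Finset.sum_le_sum (fun i hi => hterm i hi (by
            have := (Finset.mem_Icc.1 hi).1; omega))
        _ = (N:ℝ) * (C' * (2:ℝ)^(G - B/2)) := by
          rw [Finset.sum_const, Nat.card_Icc, Nat.add_sub_cancel, nsmul_eq_mul]
    have hval : (N:ℝ) * (C' * (2:ℝ)^(G - B/2)) ≤ (2*C')⁻¹ := by
      rw [hGeq, zero_sub, Real.rpow_neg (by norm_num : (0:ℝ) ≤ 2)]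
      calc (N:ℝ) * (C' * ((2:ℝ)^(B/2))⁻¹) = (N:ℝ)*C' / (2:ℝ)^(B/2) := by ring
        _ ≤ (2*C')⁻¹ := hkey
    have hhalf : (2*C')⁻¹ ≤ 2⁻¹ := inv_anti₀ two_pos (by linarith)
    have htriangle : (1:ℝ) ≤ |1 + ∑ i ∈ Finset.Icc 1 N, a i * h ^ i|
        + |∑ i ∈ Finset.Icc 1 N, a i * h ^ i| := by
      have he : (1:ℝ) = (1 + ∑ i ∈ Finset.Icc 1 N, a i * h ^ i)
          + (-(∑ i ∈ Finset.Icc 1 N, a i * h ^ i)) := by ring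
      calc (1:ℝ) = |(1 + ∑ i ∈ Finset.Icc 1 N, a i * h ^ i)
          + (-(∑ i ∈ Finset.Icc 1 N, a i * h ^ i))| := by rw [← he]; norm_num
        _ ≤ |1 + ∑ i ∈ Finset.Icc 1 N, a i * h ^ i|
            + |-(∑ i ∈ Finset.Icc 1 N, a i * h ^ i)| := abs_add_le _ _
        _ = _ := by rw [abs_neg]
    linarith
  · -- dominant index m ≥ 1: the monomial a_m h^m dominates
    have hmIcc : m ∈ Finset.Icc 1 N := Finset.mem_Icc.2 ⟨hm1, hmN⟩
    have hgap0 : (0:ℝ) ≤ G - B/2 := by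
      have hg0 := hgap 0 (Nat.zero_le N) (by omega)
      rw [hr0] at hg0
      simpa using hg0
    have hrm : 0 < r m := by
      by_contra hrm0
      push_neg at hrm0
      have hrm0' : r m = 0 := Nat.le_zero.1 hrm0
      have hmx : (m:ℝ) * x ≤ 0 := mul_nonpos_of_nonneg_of_nonpos (Nat.cast_nonneg m) hxle0
      rw [hGdef, hrm0'] at hgap0
      push_cast at hgap0
      linarith
    have hmain : C'⁻¹ * (2:ℝ)^G ≤ |a m * h ^ m| := by
      rw [abs_mul, abs_of_nonneg (pow_nonneg hh0.le m), hpowh m]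
      calc C'⁻¹ * (2:ℝ)^G = (C'⁻¹ * (2:ℝ)^((r m:ℝ))) * (2:ℝ)^((m:ℝ)*x) := by
            rw [hGdef, Real.rpow_add two_pos]; ring
        _ ≤ |a m| * (2:ℝ)^((m:ℝ)*x) :=
            mul_le_mul_of_nonneg_right (hlb' m hm1 hmN hrm) (by positivity)
    have hE1 : (1:ℝ) ≤ C' * (2:ℝ)^(G - B/2) := by
      have h2e : (1:ℝ) ≤ (2:ℝ)^(G - B/2) := by
        have hle := Real.rpow_le_rpow_of_exponent_le one_le_two hgap0
        rwa [Real.rpow_zero] at hle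
      nlinarith
    have hsplit : ∑ i ∈ Finset.Icc 1 N, a i * h ^ i
        = a m * h ^ m + ∑ i ∈ (Finset.Icc 1 N).erase m, a i * h ^ i :=
      (Finset.add_sum_erase _ _ hmIcc).symm
    have hcard : (((Finset.Icc 1 N).erase m).card : ℝ) = (N:ℝ) - 1 := by
      rw [Finset.card_erase_of_mem hmIcc, Nat.card_Icc]
      have hN1 : 1 ≤ N := hN
      push_cast [Nat.add_sub_cancel]
      rw [Nat.cast_sub hN1]
      push_cast; ring
    have hrest : |1 + ∑ i ∈ (Finset.Icc 1 N).erase m, a i * h ^ i|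
        ≤ (N:ℝ) * (C' * (2:ℝ)^(G - B/2)) := by
      calc |1 + ∑ i ∈ (Finset.Icc 1 N).erase m, a i * h ^ i|
          ≤ |(1:ℝ)| + |∑ i ∈ (Finset.Icc 1 N).erase m, a i * h ^ i| := abs_add_le _ _
        _ ≤ 1 + ∑ i ∈ (Finset.Icc 1 N).erase m, |a i * h ^ i| := by
            rw [abs_one]
            exact add_le_add_right (Finset.abs_sum_le_sum_abs _ _) 1
        _ ≤ 1 + ∑ _i ∈ (Finset.Icc 1 N).erase m, C' * (2:ℝ)^(G - B/2) := by
            refine add_le_add_right (Finset.sum_le_sum (fun i hi => ?_)) 1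
            exact hterm i (Finset.mem_of_mem_erase hi) (Finset.ne_of_mem_erase hi)
        _ = 1 + (((Finset.Icc 1 N).erase m).card : ℝ) * (C' * (2:ℝ)^(G - B/2)) := by
            rw [Finset.sum_const, nsmul_eq_mul]
        _ ≤ (N:ℝ) * (C' * (2:ℝ)^(G - B/2)) := by
            rw [hcard]; nlinarith [hE1]
    have hstep : (2*C')⁻¹ ≤ C'⁻¹ * (2:ℝ)^G - (N:ℝ) * (C' * (2:ℝ)^(G - B/2)) := by
      rw [Real.rpow_sub two_pos]
      have e1 : (N:ℝ) * (C' * ((2:ℝ)^G / (2:ℝ)^(B/2)))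
          = ((N:ℝ)*C'/(2:ℝ)^(B/2)) * (2:ℝ)^G := by ring
      rw [e1]
      have hC'inv : C'⁻¹ - (2*C')⁻¹ = (2*C')⁻¹ := by
        rw [mul_inv]; ring
      calc (2*C')⁻¹ ≤ (2*C')⁻¹ * (2:ℝ)^G := le_mul_of_one_le_right h2Cpos.le hu1
        _ ≤ (C'⁻¹ - (N:ℝ)*C'/(2:ℝ)^(B/2)) * (2:ℝ)^G := by
            apply mul_le_mul_of_nonneg_right _ hupos.le
            linarith
        _ = C'⁻¹ * (2:ℝ)^G - ((N:ℝ)*C'/(2:ℝ)^(B/2)) * (2:ℝ)^G := by ring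
    have htriangle : |a m * h ^ m|
        ≤ |1 + ∑ i ∈ Finset.Icc 1 N, a i * h ^ i|
          + |1 + ∑ i ∈ (Finset.Icc 1 N).erase m, a i * h ^ i| := by
      have he : a m * h ^ m = (1 + ∑ i ∈ Finset.Icc 1 N, a i * h ^ i)
          - (1 + ∑ i ∈ (Finset.Icc 1 N).erase m, a i * h ^ i) := by
        rw [hsplit]; ring
      rw [he]
      exact abs_sub _ _
    linarith
end
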